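/- The function r(x) = -1/12 + 72x is a rational (indeed polynomial) solution of the Riccati equation with parameter λ = 1/144: for every real x with x ≠ 0 and x ≠ 1/432, one has r'(x) + r(x)²/((1-432x)x) - 60 = (1/144)·(1/((1-432x)x)). -/

import Mathlib

/-- The function `r(x) = -1/12 + 72x` is a (polynomial, hence rational) solution of the
Riccati equation `r'(x) + C_x r(x)^2 - 60 = λ C_x` with `C_x = 1/((1-432x)x)` and
`λ = 1/144`, for every real `x ≠ 0`, `x ≠ 1/432`. -/
theorem riccati_solution_lambda_one_over_144 :
    ∀ x : ℝ, x ≠ 0 → x ≠ 1 / 432 →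
      deriv (fun y : ℝ => -1/12 + 72 * y) x
        + (-1/12 + 72 * x) ^ 2 / ((1 - 432 * x) * x) - 60
      = (1 / 144) * (1 / ((1 - 432 * x) * x)) := by
  intro x hx hx'
  have h1 : (1 : ℝ) - 432 * x ≠ 0 := by
    intro h; apply hx'; linarith [h]
  have hd : deriv (fun y : ℝ => -1/12 + 72 * y) x = 72 := by
    have : (fun y : ℝ => -1/12 + 72 * y) = fun y : ℝ => 72 * y + (-1/12) := by
      funext y; ring
    rw [this, deriv_add_const, deriv_const_mul_field, deriv_id'']
    ring
  rw [hd]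
  field_simp
  have h2 : (1 - x * 432)⁻¹ * (1 - x * 432) = 1 := inv_mul_cancel₀ (by intro h; apply h1; linarith [h])
  linear_combination (-248832 * x) * h2
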